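/- Define T₀(x,y) = ( (5/6)·(3+2x+2y)/(2+x+y) + (5/2)·(x−y)/(3+2x−2y), (5/6)·(3+2x+2y)/(2+x+y) − (5/2)·(x−y)/(3+2x−2y) ) and T₁(x,y) = ( (5/3)(x − y²/(2x)), 5y²/(6x) ). If x ≥ 2, 0 ≤ y ≤ 1, and x + y ≥ 3, then T₀(x,y) and T₁(x,y) also satisfy these three constraints (first coordinate ≥ 2, second coordinate in [0,1], sum ≥ 3). -/
import Mathlib


/-- The region {(x,y) : x ≥ 2, 0 ≤ y ≤ 1, x+y ≥ 3} is invariant under both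
renewal maps T₀ and T₁ for the normal-derivative coefficients (η₁,η₂) of the
lower domain of SG. -/
theorem renewal_maps_invariant_region (x y : ℝ)
    (hx : 2 ≤ x) (hy0 : 0 ≤ y) (hy1 : y ≤ 1) (hsum : 3 ≤ x + y) :
    let T₀ : ℝ × ℝ := ((5/6) * (3 + 2*x + 2*y) / (2 + x + y) + (5/2) * (x - y) / (3 + 2*x - 2*y),
                       (5/6) * (3 + 2*x + 2*y) / (2 + x + y) - (5/2) * (x - y) / (3 + 2*x - 2*y))
    let T₁ : ℝ × ℝ := ((5/3) * (x - y^2 / (2*x)), 5 * y^2 / (6*x))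
    (2 ≤ T₀.1 ∧ 0 ≤ T₀.2 ∧ T₀.2 ≤ 1 ∧ 3 ≤ T₀.1 + T₀.2) ∧
    (2 ≤ T₁.1 ∧ 0 ≤ T₁.2 ∧ T₁.2 ≤ 1 ∧ 3 ≤ T₁.1 + T₁.2) := by
  intro T₀ T₁
  have hd1 : (0:ℝ) < 2 + x + y := by linarith
  have hd2 : (0:ℝ) < 3 + 2*x - 2*y := by linarith
  have hx0 : (0:ℝ) < x := by linarith
  have hA1 : 3/2 ≤ (5/6) * (3 + 2*x + 2*y) / (2 + x + y) := by
    rw [le_div_iff₀ hd1]; nlinarith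
  have hA2 : (5/6) * (3 + 2*x + 2*y) / (2 + x + y) ≤ 5/3 := by
    rw [div_le_iff₀ hd1]; nlinarith
  have hB1 : 1/2 ≤ (5/2) * (x - y) / (3 + 2*x - 2*y) := by
    rw [le_div_iff₀ hd2]; nlinarith
  have hB2 : (5/2) * (x - y) / (3 + 2*x - 2*y) ≤ 5/4 := by
    rw [div_le_iff₀ hd2]; nlinarith
  have hAB : (5/6) * (3 + 2*x + 2*y) / (2 + x + y)
      - (5/2) * (x - y) / (3 + 2*x - 2*y) ≤ 1 := by
    rw [div_sub_div _ _ hd1.ne' hd2.ne', div_le_one (by positivity)]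
    nlinarith [mul_nonneg (by linarith : (0:ℝ) ≤ x - y - 1) (by linarith : (0:ℝ) ≤ x + y - 3)]
  have ht : y^2 / (2*x) ≤ 1/4 := by
    rw [div_le_iff₀ (by linarith)]; nlinarith
  have ht0 : 0 ≤ y^2 / (2*x) := by positivity
  have hs : (5/3) * (x - y^2 / (2*x)) + 5 * y^2 / (6*x) = 5/3 * x := by
    field_simp; ring
  have hT2 : 5 * y^2 / (6*x) ≤ 1 := by
    rw [div_le_iff₀ (by linarith)]; nlinarith
  simp only [T₀, T₁]
  refine ⟨⟨by linarith, by linarith, hAB, by linarith⟩,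
    ⟨by linarith, by positivity, hT2, by linarith [hs]⟩⟩
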